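/- Let A ⊆ ℝ^N and Ω ⊆ ℝ^N with |Ω| < ∞ and Ω ⊆ A_δ for some δ > 0, and define the relative distance zeta function ζ_A(s, Ω) := ∫_Ω d(x,A)^{s-N} dx. Then for every λ > 0 and every s ∈ ℂ with Re(s) > dim_B̄(A, Ω), one has ζ_{λA}(s, λΩ) = λ^s ζ_A(s, Ω). -/
import Mathlib


open MeasureTheory Metric Filter Set Topology
open Pointwise

/-- The relative upper `r`-dimensional Minkowski content of `(A, Ω)` in `ℝ^N`:
`limsup_{t→0+} |A_t ∩ Ω| / t^(N-r)`. -/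
noncomputable def relUpperMinkowskiContent (N : ℕ) (A Ω : Set (EuclideanSpace ℝ (Fin N)))
    (r : ℝ) : ENNReal :=
  Filter.limsup
    (fun t : ℝ =>
      volume (Metric.thickening t A ∩ Ω) / ENNReal.ofReal (t ^ ((N : ℝ) - r)))
    (nhdsWithin 0 (Set.Ioi 0))

/-- The relative upper box (Minkowski) dimension of `(A, Ω)`. -/
noncomputable def relUpperBoxDim (N : ℕ) (A Ω : Set (EuclideanSpace ℝ (Fin N))) : ℝ :=
  sInf {r : ℝ | relUpperMinkowskiContent N A Ω r = 0}

/-- Scaling property of the relative distance zeta function: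
`ζ_{λA}(s, λΩ) = λ^s ζ_A(s, Ω)` for `Re s > dim_B̄(A, Ω)`. -/
theorem stmt_3 (N : ℕ) (A Ω : Set (EuclideanSpace ℝ (Fin N)))
    (hΩvol : volume Ω < ⊤) (δ : ℝ) (hδ : 0 < δ) (hsub : Ω ⊆ Metric.thickening δ A)
    (l : ℝ) (hl : 0 < l) (s : ℂ) (hs : relUpperBoxDim N A Ω < s.re) :
    (∫ x in (fun y => l • y) '' Ω,
        (Metric.infDist x ((fun y => l • y) '' A) : ℂ) ^ (s - (N : ℂ)))
      = (l : ℂ) ^ s * ∫ x in Ω, (Metric.infDist x A : ℂ) ^ (s - (N : ℂ)) := by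
  have hl0 : l ≠ 0 := hl.ne'
  have himg : ∀ (S : Set (EuclideanSpace ℝ (Fin N))), (fun y => l • y) '' S = l • S := fun S => rfl
  rw [himg, himg]
  have key := Measure.setIntegral_comp_smul_of_pos (μ := volume)
      (fun x => (Metric.infDist x (l • A) : ℂ) ^ (s - (N : ℂ))) Ω hl
  rw [finrank_euclideanSpace_fin] at key
  have heq : ∀ x : EuclideanSpace ℝ (Fin N), (Metric.infDist (l • x) (l • A) : ℂ) ^ (s - (N : ℂ))
      = (l : ℂ) ^ (s - (N : ℂ)) * (Metric.infDist x A : ℂ) ^ (s - (N : ℂ)) := by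
    intro x
    rw [infDist_smul₀ hl0, Real.norm_eq_abs, abs_of_pos hl, Complex.ofReal_mul,
      Complex.mul_cpow_ofReal_nonneg hl.le (infDist_nonneg)]
  simp only [heq, integral_const_mul] at key
  have hNpow : ((l : ℂ) ^ (N : ℕ))⁻¹ ≠ 0 := by
    simp [hl0]
  have key2 : (l : ℂ) ^ (s - (N : ℂ)) * ∫ x in Ω, (Metric.infDist x A : ℂ) ^ (s - (N : ℂ))
      = ((l : ℂ) ^ (N : ℕ))⁻¹ * ∫ x in l • Ω, (Metric.infDist x (l • A) : ℂ) ^ (s - (N : ℂ)) := by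
    rw [key, Complex.real_smul]
    push_cast
    ring
  have hln : ((l:ℂ)^(N:ℕ)) ≠ 0 := by simp [hl0]
  have : ∫ x in l • Ω, (Metric.infDist x (l • A) : ℂ) ^ (s - (N : ℂ))
      = (l : ℂ) ^ (N : ℕ) * ((l : ℂ) ^ (s - (N : ℂ)) *
          ∫ x in Ω, (Metric.infDist x A : ℂ) ^ (s - (N : ℂ))) := by
    rw [key2, ← mul_assoc, mul_inv_cancel₀ hln, one_mul]
  rw [this, ← mul_assoc]
  congr 1
  rw [← Complex.cpow_natCast, ← Complex.cpow_add _ _ (by exact_mod_cast hl0)]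
  ring_nf
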